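/- If A(x) = sum_{i>=0} a_i x^i is the generating function of the colour counts and M(x) is the generating function for the number of Dyck paths of length 2n with each k-ascent coloured in one of a_k ways (with a_0 = 1 counting the empty path), then M satisfies the functional equation M(x) = A(x*M(x)). -/

import Mathlib

open Finset PowerSeries

/-- A Dyck word: list of booleans (`true` = up-step, `false` = down-step),
with equally many up- and down-steps, never going below the x-axis. -/
def IsDyckWord (p : List Bool) : Prop :=
  (∀ k, (p.take k).count false ≤ (p.take k).count true) ∧
    p.count true = p.count false

/-- The lengths of the maximal runs of up-steps (ascents) of a path, in order. -/
def ascentLengths (p : List Bool) : List ℕ :=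
  ((p.splitOn false).map List.length).filter (fun k => 0 < k)

/-- Dyck paths of semilength `n` together with a colour for each ascent,
where a `k`-ascent may receive any colour `c` with `L k c`. -/
def ColouredDyck {α : Type*} (n : ℕ) (L : ℕ → α → Prop) :
    Set (List Bool × List α) :=
  {pc | IsDyckWord pc.1 ∧ pc.1.length = 2 * n ∧
    pc.2.length = (ascentLengths pc.1).length ∧
    ∀ q ∈ (ascentLengths pc.1).zip pc.2, L q.1 q.2}

/-- Dyck paths of semilength `n` with each `k`-ascent coloured by one of `a k`
abstract colours (represented as naturals below `a k`). -/
def NColouredDyck (n : ℕ) (a : ℕ → ℕ) : Set (List Bool × List ℕ) :=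
  ColouredDyck n (fun k c => c < a k)

namespace CDGF

open List

/-- Words that stay nonnegative when started at height `k` and end at height 0. -/
def Bal (k : ℕ) (q : List Bool) : Prop :=
  (∀ m, (q.take m).count false ≤ (q.take m).count true + k) ∧
    q.count false = q.count true + k

lemma isDyckWord_iff_bal {p : List Bool} : IsDyckWord p ↔ Bal 0 p := by
  constructor
  · rintro ⟨h1, h2⟩; exact ⟨fun m => by simpa using h1 m, by omega⟩
  · rintro ⟨h1, h2⟩; exact ⟨fun m => by simpa using h1 m, by omega⟩

/-- Coloured Dyck paths of arbitrary length. -/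
def CD (a : ℕ → ℕ) : Set (List Bool × List ℕ) :=
  {pc | IsDyckWord pc.1 ∧ pc.2.length = (ascentLengths pc.1).length ∧
    ∀ q ∈ (ascentLengths pc.1).zip pc.2, q.2 < a q.1}

lemma mem_N_iff {a : ℕ → ℕ} {n : ℕ} {pc : List Bool × List ℕ} :
    pc ∈ NColouredDyck n a ↔ pc ∈ CD a ∧ pc.1.length = 2 * n := by
  constructor
  · rintro ⟨h1, h2, h3, h4⟩; exact ⟨⟨h1, h3, h4⟩, h2⟩
  · rintro ⟨⟨h1, h3, h4⟩, h2⟩; exact ⟨h1, h2, h3, h4⟩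

/-- Lists of `i` coloured Dyck paths with total word length `2m`. -/
def Tup (a : ℕ → ℕ) (i m : ℕ) : Set (List (List Bool × List ℕ)) :=
  {Ps | Ps.length = i ∧ (Ps.map (fun P => P.1.length)).sum = 2 * m ∧
    ∀ P ∈ Ps, P ∈ CD a}

/-! ### counting basics -/

lemma length_eq_counts (p : List Bool) : p.length = p.count true + p.count false := by
  induction p with
  | nil => rfl
  | cons b t ih =>
    cases b <;>
      simp only [List.count_cons, length_cons, ih] <;> simp <;> omega

/-! ### splitOn / ascentLengths lemmas -/

lemma splitOn_false_nil : ([] : List Bool).splitOn false = [[]] := rfl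

lemma splitOn_cons_false (R : List Bool) :
    (false :: R).splitOn false = [] :: R.splitOn false := by
  simp [List.splitOn, List.splitOnP_cons]

lemma splitOn_cons_true (R : List Bool) :
    (true :: R).splitOn false = (R.splitOn false).modifyHead (true :: ·) := by
  simp [List.splitOn, List.splitOnP_cons]

lemma splitOn_append (P R : List Bool) :
    (P ++ false :: R).splitOn false = P.splitOn false ++ R.splitOn false := by
  induction P with
  | nil => simpa using splitOn_cons_false R
  | cons b t ih =>
    cases b
    · simp only [cons_append, splitOn_cons_false, ih]
    · simp only [cons_append, splitOn_cons_true, ih]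
      have h := List.splitOnP_ne_nil (fun x => x == false) t
      rcases hs : t.splitOn false with _ | ⟨hd, tl⟩
      · exact absurd hs h
      · simp [List.modifyHead]

lemma ascentLengths_nil : ascentLengths [] = [] := rfl

lemma ascentLengths_cons_false (R : List Bool) :
    ascentLengths (false :: R) = ascentLengths R := by
  simp [ascentLengths, splitOn_cons_false]

lemma ascentLengths_append (P R : List Bool) :
    ascentLengths (P ++ false :: R) = ascentLengths P ++ ascentLengths R := by
  simp [ascentLengths, splitOn_append]

lemma splitOn_replicate (k : ℕ) :
    (List.replicate k true).splitOn false = [List.replicate k true] := by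
  apply List.splitOnP_eq_single
  intro x hx
  simp only [List.eq_of_mem_replicate hx]
  simp

lemma ascentLengths_replicate (k : ℕ) :
    ascentLengths (List.replicate k true) = if k = 0 then [] else [k] := by
  rcases Nat.eq_zero_or_pos k with h | h
  · subst h; rfl
  · simp [ascentLengths, splitOn_replicate, h.ne']
    omega

lemma ascentLengths_replicate_append (k : ℕ) (hk : k ≠ 0) (R : List Bool) :
    ascentLengths (List.replicate k true ++ false :: R) = k :: ascentLengths R := by
  rw [ascentLengths_append, ascentLengths_replicate, if_neg hk, List.singleton_append]

lemma ascentLengths_flatten (Ps : List (List Bool)) :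
    ascentLengths (Ps.map (fun P => false :: P)).flatten =
      (Ps.map ascentLengths).flatten := by
  induction Ps with
  | nil => rfl
  | cons P Ps ih =>
    rcases Ps with _ | ⟨Q, Ps'⟩
    · simp [ascentLengths_cons_false]
    · have h1 : ((P :: Q :: Ps').map (fun P => false :: P)).flatten
          = false :: (P ++ (false :: (Q ++ ((Ps'.map (fun P => false :: P)).flatten)))) := by
        simp
      have h2 : ((Q :: Ps').map (fun P => false :: P)).flatten
          = false :: (Q ++ ((Ps'.map (fun P => false :: P)).flatten)) := by simp
      rw [h2, ascentLengths_cons_false] at ih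
      rw [h1, ascentLengths_cons_false, ascentLengths_append, List.map_cons,
        List.flatten_cons, ih]


/-! ### balance lemmas -/

lemma bal_cons_false_append {P X : List Bool} {k : ℕ} (hP : Bal 0 P) (hX : Bal k X) :
    Bal (k + 1) (false :: (P ++ X)) := by
  obtain ⟨hP1, hP2⟩ := hP
  obtain ⟨hX1, hX2⟩ := hX
  constructor
  · intro m
    cases m with
    | zero => simp
    | succ m =>
      have h1 := hP1 m
      have h2 := hX1 (m - P.length)
      simp only [List.take_succ_cons, List.take_append, List.count_cons,
        List.count_append] at *
      simp at *
      omega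
  · simp only [List.count_cons, List.count_append]
    simp
    omega

lemma bal_flatten (Ps : List (List Bool)) (h : ∀ P ∈ Ps, Bal 0 P) :
    Bal Ps.length (Ps.map (fun P => false :: P)).flatten := by
  induction Ps with
  | nil => exact ⟨by simp, by simp⟩
  | cons P Ps ih =>
    have hb := bal_cons_false_append (h P (List.mem_cons_self))
      (ih fun Q hQ => h Q (List.mem_cons_of_mem _ hQ))
    simpa using hb

lemma isDyck_replicate_append {k : ℕ} {q : List Bool} (h : Bal k q) :
    IsDyckWord (List.replicate k true ++ q) := by
  obtain ⟨h1, h2⟩ := h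
  constructor
  · intro m
    rcases le_or_gt m k with hm | hm
    · have hz : m - (List.replicate k true).length = 0 := by simp; omega
      rw [List.take_append, hz, List.take_zero, List.append_nil,
        List.take_replicate, List.count_replicate, List.count_replicate]
      simp
    · have := h1 (m - k)
      simp only [List.take_append, List.count_append, List.take_replicate,
        List.count_replicate, List.length_replicate] at *
      simp at *
      omega
  · have := h2
    simp only [List.count_append, List.count_replicate]
    simp
    omega

lemma bal_of_isDyck_replicate_append {k : ℕ} {q : List Bool}
    (h : IsDyckWord (List.replicate k true ++ q)) : Bal k q := by
  obtain ⟨h1, h2⟩ := h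
  constructor
  · intro m
    have := h1 (k + m)
    simp only [List.take_append, List.count_append, List.take_replicate,
      List.count_replicate, List.length_replicate] at this
    simp at this
    omega
  · have := h2
    simp only [List.count_append, List.count_replicate] at this
    simp at this
    omega


/-! ### first-crossing decomposition -/

lemma ivt : ∀ (q : List Bool) (j : ℤ), 0 ≤ j → j ≤ (q.count false : ℤ) - q.count true →
    ∃ t, ((q.take t).count false : ℤ) - (q.take t).count true = j := by
  intro q
  induction q with
  | nil => intro j h0 h1; simp at h1; exact ⟨0, by simp; omega⟩
  | cons b t ih =>
    intro j h0 h1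
    rcases eq_or_lt_of_le h0 with rfl | hj
    · exact ⟨0, by simp⟩
    cases b
    · obtain ⟨s, hs⟩ := ih (j - 1) (by omega)
        (by simp [List.count_cons] at h1; push_cast at h1 ⊢; omega)
      refine ⟨s + 1, ?_⟩
      simp only [List.take_succ_cons, List.count_cons]
      simp
      push_cast
      omega
    · obtain ⟨s, hs⟩ := ih (j + 1) (by omega)
        (by simp [List.count_cons] at h1; push_cast at h1 ⊢; omega)
      refine ⟨s + 1, ?_⟩
      simp only [List.take_succ_cons, List.count_cons]
      simp
      push_cast
      omega

lemma peel {q : List Bool} {j : ℕ}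
    (h2 : q.count false = q.count true + (j + 1)) :
    ∃ P r, q = P ++ false :: r ∧ Bal 0 P := by
  classical
  have hex : ∃ t, ((q.take t).count false : ℤ) - (q.take t).count true = 1 :=
    ivt q 1 one_pos.le (by push_cast; omega)
  set t₀ := Nat.find hex with ht₀def
  have ht₀ : ((q.take t₀).count false : ℤ) - (q.take t₀).count true = 1 := Nat.find_spec hex
  have hmin : ∀ m, m < t₀ → ((q.take m).count false : ℤ) - (q.take m).count true ≤ 0 := by
    intro m
    induction m with
    | zero => intro _; simp
    | succ m ih =>
      intro h
      have h0 := ih (Nat.lt_of_succ_lt h)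
      have hne := Nat.find_min hex h
      rcases hqm : q[m]? with _ | b
      · rw [List.take_succ, hqm] at hne ⊢
        simp at hne ⊢
        omega
      · rw [List.take_succ, hqm] at hne ⊢
        cases b <;> simp [List.count_append] at hne ⊢ <;> omega
  have ht₀len : t₀ ≤ q.length := by
    by_contra hc
    push_neg at hc
    have h3 := hmin q.length hc
    rw [List.take_length] at h3
    omega
  have ht₀pos : 0 < t₀ := by
    rcases Nat.eq_zero_or_pos t₀ with h | h
    · rw [h] at ht₀; simp at ht₀
    · exact h
  obtain ⟨s, hs⟩ : ∃ s, t₀ = s + 1 := ⟨t₀ - 1, by omega⟩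
  have hslen : s < q.length := by omega
  have hbal_s := hmin s (by omega)
  have htake : q.take (s + 1) = q.take s ++ [q[s]] := by
    rw [List.take_succ, List.getElem?_eq_getElem hslen]
    rfl
  rw [hs, htake] at ht₀
  have hqs : q[s] = false := by
    rcases hb : q[s] with _ | _
    · rfl
    · rw [hb] at ht₀; simp [List.count_append] at ht₀; omega
  rw [hqs] at ht₀
  have hbal0 : ((q.take s).count false : ℤ) = (q.take s).count true := by
    simp [List.count_append] at ht₀; omega
  refine ⟨q.take s, q.drop (s + 1), ?_, ?_⟩
  · conv_lhs => rw [← List.take_append_drop s q]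
    rw [List.drop_eq_getElem_cons hslen, hqs]
  · constructor
    · intro m
      rw [List.take_take]
      rcases le_or_gt s m with hm | hm
      · rw [min_eq_right hm]  -- min m s: careful direction
        omega
      · have := hmin (min m s) (by omega)
        omega
    · omega


lemma exists_parts (a : ℕ → ℕ) : ∀ (N : ℕ) (q : List Bool) (cs : List ℕ) (k : ℕ),
    q.length ≤ N →
    Bal (k + 1) (false :: q) →
    cs.length = (ascentLengths q).length →
    (∀ x ∈ (ascentLengths q).zip cs, x.2 < a x.1) →
    ∃ Ps : List (List Bool × List ℕ), Ps.length = k + 1 ∧ (∀ P ∈ Ps, P ∈ CD a) ∧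
      false :: q = (Ps.map (fun P => false :: P.1)).flatten ∧
      cs = (Ps.map Prod.snd).flatten := by
  intro N
  induction N with
  | zero =>
    intro q cs k hlen hbal hcs hcond
    have hq : q = [] := List.length_eq_zero_iff.1 (Nat.le_zero.1 hlen)
    subst hq
    have hk : k = 0 := by
      have := hbal.2
      simp at this
      omega
    subst hk
    refine ⟨[([], [])], rfl, ?_, by simp, ?_⟩
    · intro P hP
      simp at hP
      subst hP
      exact ⟨⟨by simp, by simp⟩, by simp [ascentLengths_nil], by simp [ascentLengths_nil]⟩
    · have : cs = [] := List.length_eq_zero_iff.1 (by simpa [ascentLengths_nil] using hcs)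
      simp [this]
  | succ N ih =>
    intro q cs k hlen hbal hcs hcond
    cases k with
    | zero =>
      have hd : Bal 0 q := by
        constructor
        · intro m
          have := hbal.1 (m + 1)
          simp only [List.take_succ_cons, List.count_cons] at this
          simp at this
          omega
        · have := hbal.2
          simp [List.count_cons] at this
          omega
      refine ⟨[(q, cs)], rfl, ?_, by simp, by simp⟩
      intro P hP
      simp at hP
      subst hP
      exact ⟨isDyckWord_iff_bal.2 hd, hcs, hcond⟩
    | succ k =>
      have h2 : q.count false = q.count true + (k + 1) := by
        have := hbal.2
        simp [List.count_cons] at this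
        omega
      obtain ⟨P, r, hqe, hP⟩ := peel h2
      have hPf : P.count false = P.count true := hP.2
      have hcnt : q.count false = P.count false + 1 + r.count false ∧
          q.count true = P.count true + r.count true := by
        rw [hqe]; simp [List.count_append, List.count_cons]; omega
      have hbr : Bal (k + 1) (false :: r) := by
        constructor
        · intro m
          cases m with
          | zero => simp
          | succ m =>
            have htk : q.take (P.length + (1 + m)) = P ++ false :: r.take m := by
              rw [hqe, List.take_append,
                List.take_of_length_le (by omega : P.length ≤ P.length + (1 + m))]
              congr 1
              have h : P.length + (1 + m) - P.length = m + 1 := by omega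
              rw [h, List.take_succ_cons]
            have hb := hbal.1 (P.length + (1 + m) + 1)
            rw [show P.length + (1 + m) + 1 = (P.length + (1 + m)) + 1 from rfl,
              List.take_succ_cons, htk] at hb
            simp only [List.take_succ_cons, List.count_cons, List.count_append] at hb ⊢
            simp at hb ⊢
            omega
        · simp [List.count_cons]
          omega
      have haL : ascentLengths q = ascentLengths P ++ ascentLengths r := by
        rw [hqe, ascentLengths_append]
      set cs₁ := cs.take (ascentLengths P).length with hc1
      set cs₂ := cs.drop (ascentLengths P).length with hc2
      have hcsl : cs.length = (ascentLengths P).length + (ascentLengths r).length := by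
        rw [hcs, haL, List.length_append]
      have hlen1 : cs₁.length = (ascentLengths P).length := by
        rw [hc1, List.length_take]; omega
      have hlen2 : cs₂.length = (ascentLengths r).length := by
        rw [hc2, List.length_drop]; omega
      have hzip : (ascentLengths q).zip cs =
          (ascentLengths P).zip cs₁ ++ (ascentLengths r).zip cs₂ := by
        conv_lhs => rw [haL, ← List.take_append_drop (ascentLengths P).length cs]
        exact List.zip_append hlen1.symm
      have hcondP : ∀ x ∈ (ascentLengths P).zip cs₁, x.2 < a x.1 := fun x hx =>
        hcond x (by rw [hzip]; exact List.mem_append_left _ hx)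
      have hcondr : ∀ x ∈ (ascentLengths r).zip cs₂, x.2 < a x.1 := fun x hx =>
        hcond x (by rw [hzip]; exact List.mem_append_right _ hx)
      have hrlen : r.length ≤ N := by
        have := congrArg List.length hqe
        simp at this
        omega
      obtain ⟨Ps', hPs'len, hPs'cd, hPs'w, hPs'c⟩ := ih r cs₂ k hrlen hbr hlen2 hcondr
      refine ⟨(P, cs₁) :: Ps', by simp [hPs'len], ?_, ?_, ?_⟩
      · intro Q hQ
        rcases List.mem_cons.1 hQ with h | h
        · subst h
          exact ⟨isDyckWord_iff_bal.2 hP, hlen1, hcondP⟩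
        · exact hPs'cd Q h
      · simp only [List.map_cons, List.flatten_cons]
        rw [← hPs'w, hqe]
        simp
      · simp only [List.map_cons, List.flatten_cons]
        rw [← hPs'c, hc1, hc2]
        exact (List.take_append_drop _ cs).symm


/-! ### uniqueness of the decomposition -/

lemma head_not_lt {P P' Y A₂ : List Bool} (hP : IsDyckWord P) (hP' : IsDyckWord P')
    (heq : P ++ false :: Y = P' ++ A₂) (hl : P.length < P'.length) : False := by
  have ht := congrArg (List.take (P.length + 1)) heq
  rw [List.take_append, List.take_append,
    List.take_of_length_le (by omega : P.length ≤ P.length + 1),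
    (by omega : P.length + 1 - P.length = 0 + 1), List.take_succ_cons, List.take_zero,
    (by omega : P.length + 1 - P'.length = 0), List.take_zero, List.append_nil] at ht
  have hpref := hP'.1 (P.length + 1)
  rw [← ht] at hpref
  have h1 := hP.2
  simp [List.count_append] at hpref
  omega

lemma parts_unique : ∀ (L₁ L₂ : List (List Bool)), (∀ P ∈ L₁, IsDyckWord P) →
    (∀ P ∈ L₂, IsDyckWord P) → L₁.length = L₂.length →
    (L₁.map (fun P => false :: P)).flatten = (L₂.map (fun P => false :: P)).flatten →
    L₁ = L₂ := by
  intro L₁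
  induction L₁ with
  | nil =>
    intro L₂ _ _ hlen _
    exact (List.length_eq_zero_iff.1 hlen.symm).symm
  | cons P L₁' ih =>
    intro L₂ h1 h2 hlen hf
    rcases L₂ with _ | ⟨P', L₂'⟩
    · simp at hlen
    simp only [List.map_cons, List.flatten_cons, List.cons_append, List.cons.injEq,
      true_and] at hf
    have hdP := h1 P (List.mem_cons_self)
    have hdP' := h2 P' (List.mem_cons_self)
    have hPP' : P = P' := by
      rcases lt_trichotomy P.length P'.length with hl | hl | hl
      · exfalso
        rcases L₁' with _ | ⟨Q, t⟩
        · rcases L₂' with _ | ⟨Q', t'⟩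
          · simp only [List.map_nil, List.flatten_nil, List.append_nil] at hf
            rw [hf] at hl
            omega
          · simp at hlen
        · have : ((Q :: t).map (fun P => false :: P)).flatten
              = false :: (Q ++ ((t.map (fun P => false :: P)).flatten)) := by simp
          rw [this] at hf
          exact head_not_lt hdP hdP' hf hl
      · have := congrArg (List.take P.length) hf
        rwa [List.take_append, List.take_append,
          List.take_length, Nat.sub_self, List.take_zero, List.append_nil,
          (by rw [hl] : P.length = P'.length), List.take_length, Nat.sub_self,
          List.take_zero, List.append_nil] at this
      · exfalso
        rcases L₂' with _ | ⟨Q', t'⟩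
        · rcases L₁' with _ | ⟨Q, t⟩
          · simp only [List.map_nil, List.flatten_nil, List.append_nil] at hf
            rw [hf] at hl
            omega
          · simp at hlen
        · have : ((Q' :: t').map (fun P => false :: P)).flatten
              = false :: (Q' ++ ((t'.map (fun P => false :: P)).flatten)) := by simp
          rw [this] at hf
          exact head_not_lt hdP' hdP hf.symm hl
    subst hPP'
    have hff : (L₁'.map (fun P => false :: P)).flatten
        = (L₂'.map (fun P => false :: P)).flatten := by
      exact List.append_cancel_left hf
    rw [ih L₂' (fun Q hQ => h1 Q (List.mem_cons_of_mem _ hQ))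
      (fun Q hQ => h2 Q (List.mem_cons_of_mem _ hQ)) (by simpa using hlen) hff]

lemma flatten_inj : ∀ (A B : List (List ℕ)), A.map List.length = B.map List.length →
    A.flatten = B.flatten → A = B := by
  intro A
  induction A with
  | nil =>
    intro B h _
    rcases B with _ | ⟨y, B⟩
    · rfl
    · simp at h
  | cons x A ih =>
    intro B h hf
    rcases B with _ | ⟨y, B⟩
    · simp at h
    simp only [List.map_cons, List.cons.injEq] at h
    have hx : x = y := by
      have := congrArg (List.take x.length) hf
      rwa [List.flatten_cons, List.flatten_cons, List.take_append,
        List.take_append, List.take_length, Nat.sub_self, List.take_zero,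
        List.append_nil, (by rw [h.1] : x.length = y.length), List.take_length,
        Nat.sub_self, List.take_zero, List.append_nil] at this
    subst hx
    rw [ih B h.2 (by simpa using hf)]

lemma pair_list_ext {α β : Type*} : ∀ (L₁ L₂ : List (α × β)),
    L₁.map Prod.fst = L₂.map Prod.fst → L₁.map Prod.snd = L₂.map Prod.snd → L₁ = L₂ := by
  intro L₁
  induction L₁ with
  | nil =>
    intro L₂ h _
    rcases L₂ with _ | ⟨y, L₂⟩
    · rfl
    · simp at h
  | cons x L₁ ih =>
    intro L₂ h1 h2
    rcases L₂ with _ | ⟨y, L₂⟩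
    · simp at h1
    simp only [List.map_cons, List.cons.injEq] at h1 h2
    rw [ih L₂ h1.2 h2.2, show x = y from Prod.ext h1.1 h2.1]

lemma takeWhile_word (k : ℕ) (Z : List Bool) :
    List.takeWhile id (List.replicate k true ++ false :: Z) = List.replicate k true := by
  induction k with
  | zero => simp
  | succ k ih => simpa [List.replicate_succ] using ih


/-! ### the composition map -/

lemma sum_map_add_one {α : Type*} (l : List α) (f : α → ℕ) :
    (l.map (fun x => f x + 1)).sum = (l.map f).sum + l.length := by
  induction l with
  | nil => rfl
  | cons x l ih => simp [ih]; omega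

lemma ascentLengths_word {k : ℕ} (hk : k ≠ 0) (W : List (List Bool)) (hW : W.length = k) :
    ascentLengths (List.replicate k true ++ (W.map (fun w => false :: w)).flatten)
      = k :: (W.map ascentLengths).flatten := by
  rcases W with _ | ⟨w, t⟩
  · exact absurd hW.symm hk
  have hfl : ((w :: t).map (fun w => false :: w)).flatten
      = false :: (w ++ ((t.map (fun w => false :: w)).flatten)) := by simp
  rw [hfl, ascentLengths_replicate_append _ hk, ← ascentLengths_cons_false, ← hfl,
    ascentLengths_flatten]

lemma zip_flatten_cond (a : ℕ → ℕ) : ∀ (Ps : List (List Bool × List ℕ)),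
    (∀ P ∈ Ps, P.2.length = (ascentLengths P.1).length) →
    (∀ P ∈ Ps, ∀ x ∈ (ascentLengths P.1).zip P.2, x.2 < a x.1) →
    ∀ x ∈ ((Ps.map (fun P => ascentLengths P.1)).flatten).zip ((Ps.map Prod.snd).flatten),
      x.2 < a x.1 := by
  intro Ps
  induction Ps with
  | nil => intro _ _ x hx; simp at hx
  | cons Q Ps ih =>
    intro h1 h2 x hx
    simp only [List.map_cons, List.flatten_cons] at hx
    rw [List.zip_append (h1 Q (List.mem_cons_self)).symm] at hx
    rcases List.mem_append.1 hx with h | h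
    · exact h2 Q (List.mem_cons_self) x h
    · exact ih (fun P hP => h1 P (List.mem_cons_of_mem _ hP))
        (fun P hP => h2 P (List.mem_cons_of_mem _ hP)) x h

lemma compose_mem (a : ℕ → ℕ) {k c m : ℕ} {Ps : List (List Bool × List ℕ)} (hk0 : k ≠ 0)
    (hc : c < a k) (hPs : Ps ∈ Tup a k m) :
    (List.replicate k true ++ (Ps.map (fun P => false :: P.1)).flatten,
      c :: (Ps.map Prod.snd).flatten) ∈ NColouredDyck (k + m) a := by
  obtain ⟨hlen, hsum, hcd⟩ := hPs
  have hmm : (Ps.map (fun P => false :: P.1)) = ((Ps.map Prod.fst).map (fun w => false :: w)) := by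
    rw [List.map_map]; rfl
  have haL : ascentLengths (List.replicate k true ++ (Ps.map (fun P => false :: P.1)).flatten)
      = k :: ((Ps.map Prod.fst).map ascentLengths).flatten := by
    rw [hmm, ascentLengths_word hk0 _ (by simpa using hlen)]
  have haL' : ((Ps.map Prod.fst).map ascentLengths).flatten
      = (Ps.map (fun P => ascentLengths P.1)).flatten := by
    rw [List.map_map]; rfl
  have hCDlen : ∀ P ∈ Ps, P.2.length = (ascentLengths P.1).length := fun P hP => (hcd P hP).2.1
  refine ⟨?_, ?_, ?_, ?_⟩
  · rw [hmm]
    apply isDyck_replicate_append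
    have := bal_flatten (Ps.map Prod.fst)
      (fun P hP => by
        obtain ⟨Q, hQ, rfl⟩ := List.mem_map.1 hP
        exact isDyckWord_iff_bal.1 (hcd Q hQ).1)
    rwa [List.length_map, hlen] at this
  · simp only [List.length_append, List.length_replicate, List.length_flatten, List.map_map]
    have h1 : Ps.map (List.length ∘ fun P => false :: P.1) = Ps.map (fun P => P.1.length + 1) := by
      apply List.map_congr_left
      intro P _
      simp
    rw [h1, sum_map_add_one, hsum, hlen]
    omega
  · rw [haL, haL']
    simp only [List.length_cons, List.length_flatten, List.map_map]
    congr 2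
    apply List.map_congr_left
    intro P hP
    simpa using hCDlen P hP
  · intro x hx
    rw [haL, haL', List.zip_cons_cons] at hx
    rcases List.mem_cons.1 hx with rfl | hx
    · exact hc
    · exact zip_flatten_cond a Ps hCDlen (fun P hP => (hcd P hP).2.2) x hx


lemma exists_decomp (a : ℕ → ℕ) {n : ℕ} (hn : n ≠ 0) {pc : List Bool × List ℕ}
    (hpc : pc ∈ NColouredDyck n a) :
    ∃ k c Ps, k ≠ 0 ∧ k ≤ n ∧ c < a k ∧ Ps ∈ Tup a k (n - k) ∧
      pc = (List.replicate k true ++ (Ps.map (fun P => false :: P.1)).flatten,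
        c :: (Ps.map Prod.snd).flatten) := by
  obtain ⟨hd, hlen, hclen, hcond⟩ := hpc
  set p := pc.1 with hp
  set k := (p.takeWhile id).length with hkdef
  have hrep : p.takeWhile id = List.replicate k true := by
    rw [List.eq_replicate_iff]
    exact ⟨rfl, fun b hb => by simpa using List.mem_takeWhile_imp hb⟩
  have hsplit : p = List.replicate k true ++ p.dropWhile id := by
    rw [← hrep, List.takeWhile_append_dropWhile]
  have hdne : p.dropWhile id ≠ [] := by
    intro hcontra
    rw [hcontra, List.append_nil] at hsplit
    have h2 := hd.2
    rw [hsplit] at h2 hlen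
    simp [List.count_replicate] at h2
    simp [h2] at hlen
    omega
  obtain ⟨b, r, hbr⟩ : ∃ b r, p.dropWhile id = b :: r := by
    rcases hw : p.dropWhile id with _ | ⟨b, r⟩
    · exact absurd hw hdne
    · exact ⟨b, r, rfl⟩
  have hb : b = false := by
    have := List.dropWhile_get_zero_not id p (by rw [hbr]; simp)
    simpa [hbr] using this
  subst hb
  rw [hbr] at hsplit
  have hk0 : k ≠ 0 := by
    intro hcontra
    rw [hcontra] at hsplit
    simp at hsplit
    have := hd.1 1
    rw [hsplit] at this
    simp at this
  have hbal : Bal k (false :: r) := by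
    apply bal_of_isDyck_replicate_append
    rwa [← hsplit]
  have haLp : ascentLengths p = k :: ascentLengths r := by
    rw [hsplit, ascentLengths_replicate_append _ hk0]
  obtain ⟨c, cs, hcs⟩ : ∃ c cs, pc.2 = c :: cs := by
    rcases hw : pc.2 with _ | ⟨c, cs⟩
    · rw [hw, haLp] at hclen
      simp at hclen
    · exact ⟨c, cs, rfl⟩
  have hzipc : ∀ x ∈ (k :: ascentLengths r).zip (c :: cs), x.2 < a x.1 := by
    rw [← haLp, ← hcs]
    exact hcond
  have hck : c < a k := hzipc (k, c) (by rw [List.zip_cons_cons]; exact List.mem_cons_self)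
  obtain ⟨k', hk'⟩ : ∃ k', k = k' + 1 := ⟨k - 1, by omega⟩
  obtain ⟨Ps, hPlen, hPcd, hPw, hPc⟩ := exists_parts a r.length r cs k' le_rfl
    (by rwa [← hk'])
    (by rw [hcs, haLp] at hclen; simpa using hclen)
    (fun x hx => hzipc x (by rw [List.zip_cons_cons]; exact List.mem_cons_of_mem _ hx))
  have hPlen' : Ps.length = k := by omega
  have hflatlen : (false :: r).length = Ps.length + (Ps.map (fun P => P.1.length)).sum := by
    rw [hPw]
    simp only [List.length_flatten, List.map_map]
    have h1 : Ps.map (List.length ∘ fun P => false :: P.1) = Ps.map (fun P => P.1.length + 1) := by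
      apply List.map_congr_left
      intro P _
      simp
    rw [h1, sum_map_add_one]
    omega
  have hplen2 : p.length = 2 * n := hlen
  have hlen3 : p.length = k + (1 + r.length) := by
    rw [hsplit]
    simp
    omega
  have hkn : k ≤ n ∧ (Ps.map (fun P => P.1.length)).sum = 2 * (n - k) := by
    simp at hflatlen
    constructor <;> omega
  refine ⟨k, c, Ps, hk0, hkn.1, hck, ⟨hPlen', hkn.2, hPcd⟩, ?_⟩
  have : pc = (p, pc.2) := rfl
  rw [this, hcs, hsplit, hPw, hPc]


lemma compose_inj (a : ℕ → ℕ) {k k' c c' : ℕ} {Ps Ps' : List (List Bool × List ℕ)}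
    (hk : Ps.length = k) (hk' : Ps'.length = k') (hk0 : k ≠ 0) (hk0' : k' ≠ 0)
    (hcd : ∀ P ∈ Ps, P ∈ CD a) (hcd' : ∀ P ∈ Ps', P ∈ CD a)
    (hw : List.replicate k true ++ (Ps.map (fun P => false :: P.1)).flatten
        = List.replicate k' true ++ (Ps'.map (fun P => false :: P.1)).flatten)
    (hc : c :: (Ps.map Prod.snd).flatten = c' :: (Ps'.map Prod.snd).flatten) :
    k = k' ∧ c = c' ∧ Ps = Ps' := by
  obtain ⟨Q, t, hQt⟩ : ∃ Q t, Ps = Q :: t := by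
    rcases Ps with _ | ⟨Q, t⟩
    · simp at hk; omega
    · exact ⟨Q, t, rfl⟩
  obtain ⟨Q', t', hQt'⟩ : ∃ Q' t', Ps' = Q' :: t' := by
    rcases Ps' with _ | ⟨Q', t'⟩
    · simp at hk'; omega
    · exact ⟨Q', t', rfl⟩
  have hfl : (Ps.map (fun P => false :: P.1)).flatten
      = false :: (Q.1 ++ ((t.map (fun P => false :: P.1)).flatten)) := by rw [hQt]; simp
  have hfl' : (Ps'.map (fun P => false :: P.1)).flatten
      = false :: (Q'.1 ++ ((t'.map (fun P => false :: P.1)).flatten)) := by rw [hQt']; simp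
  have hkk : k = k' := by
    have h1 := congrArg (fun l => (List.takeWhile id l).length) hw
    rw [hfl, hfl'] at h1
    simpa [takeWhile_word] using h1
  subst hkk
  have hwf : (Ps.map (fun P => false :: P.1)).flatten
      = (Ps'.map (fun P => false :: P.1)).flatten := List.append_cancel_left hw
  have hfst : Ps.map Prod.fst = Ps'.map Prod.fst := by
    apply parts_unique
    · intro P hP
      obtain ⟨R, hR, rfl⟩ := List.mem_map.1 hP
      exact (hcd R hR).1
    · intro P hP
      obtain ⟨R, hR, rfl⟩ := List.mem_map.1 hP
      exact (hcd' R hR).1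
    · simp [hk, hk']
    · rw [List.map_map, List.map_map]
      exact hwf
  have hcc : c = c' := by
    injection hc
  have hsc : (Ps.map Prod.snd).flatten = (Ps'.map Prod.snd).flatten := by
    injection hc
  have hsnd : Ps.map Prod.snd = Ps'.map Prod.snd := by
    apply flatten_inj _ _ _ hsc
    rw [List.map_map, List.map_map]
    have e1 : Ps.map (List.length ∘ Prod.snd)
        = Ps.map (fun P => (ascentLengths P.1).length) := by
      apply List.map_congr_left
      intro P hP
      exact (hcd P hP).2.1
    have e2 : Ps'.map (List.length ∘ Prod.snd)
        = Ps'.map (fun P => (ascentLengths P.1).length) := by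
      apply List.map_congr_left
      intro P hP
      exact (hcd' P hP).2.1
    rw [e1, e2]
    have e3 : ∀ (L : List (List Bool × List ℕ)), L.map (fun P => (ascentLengths P.1).length)
        = (L.map Prod.fst).map (fun w => (ascentLengths w).length) := by
      intro L
      rw [List.map_map]
      rfl
    rw [e3, e3, hfst]
  exact ⟨rfl, hcc, pair_list_ext _ _ hfst hsnd⟩


/-! ### finiteness -/

lemma length_mem_splitOn : ∀ (p : List Bool), ∀ l ∈ p.splitOn false, l.length ≤ p.length := by
  intro p
  induction p with
  | nil =>
    intro l hl
    rw [splitOn_false_nil] at hl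
    simp at hl
    simp [hl]
  | cons b t ih =>
    intro l hl
    cases b
    · rw [splitOn_cons_false] at hl
      rcases List.mem_cons.1 hl with rfl | hl
      · simp
      · have := ih l hl
        simp
        omega
    · rw [splitOn_cons_true] at hl
      rcases hs : t.splitOn false with _ | ⟨hd, tl⟩
      · exact absurd hs (List.splitOnP_ne_nil _ t)
      rw [hs] at hl
      simp only [List.modifyHead] at hl
      rcases List.mem_cons.1 hl with rfl | hl
      · have := ih hd (by rw [hs]; exact List.mem_cons_self)
        simp
        omega
      · have := ih l (by rw [hs]; exact List.mem_cons_of_mem _ hl)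
        simp
        omega

lemma length_splitOn : ∀ (p : List Bool), (p.splitOn false).length ≤ p.length + 1 := by
  intro p
  induction p with
  | nil => simp [splitOn_false_nil]
  | cons b t ih =>
    cases b
    · rw [splitOn_cons_false]
      simp
      omega
    · rw [splitOn_cons_true]
      rw [List.length_modifyHead]
      simp
      omega

lemma mem_ascentLengths_le {p : List Bool} {j : ℕ} (h : j ∈ ascentLengths p) :
    j ≤ p.length := by
  have h1 := List.mem_of_mem_filter h
  obtain ⟨l, hl, rfl⟩ := List.mem_map.1 h1
  exact length_mem_splitOn p l hl

lemma length_ascentLengths_le (p : List Bool) : (ascentLengths p).length ≤ p.length + 1 := by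
  calc (ascentLengths p).length ≤ ((p.splitOn false).map List.length).length :=
        List.length_filter_le _ _
    _ = (p.splitOn false).length := List.length_map _
    _ ≤ p.length + 1 := length_splitOn p

lemma finite_lists {γ : Type*} {K : Set γ} (hK : K.Finite) (i : ℕ) :
    {l : List γ | l.length ≤ i ∧ ∀ x ∈ l, x ∈ K}.Finite := by
  have := hK.to_subtype
  apply Set.Finite.subset ((List.finite_length_le K i).image (List.map Subtype.val))
  rintro l ⟨h1, h2⟩
  exact ⟨l.pmap (fun x h => ⟨x, h⟩) h2, by simpa using h1, by simp [List.map_pmap]⟩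

lemma finite_CD_le (a : ℕ → ℕ) (L : ℕ) :
    {pc : List Bool × List ℕ | pc ∈ CD a ∧ pc.1.length ≤ L}.Finite := by
  classical
  set B := (Finset.range (L + 1)).sup a with hB
  apply Set.Finite.subset (Set.Finite.prod (List.finite_length_le Bool L)
    (finite_lists (Set.finite_Iio B) (L + 1)))
  rintro ⟨p, cs⟩ ⟨⟨hd, hlen0, hcond0⟩, hL0⟩
  have hL : p.length ≤ L := hL0
  have hlen : cs.length = (ascentLengths p).length := hlen0
  have hcond : ∀ q ∈ (ascentLengths p).zip cs, q.2 < a q.1 := hcond0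
  refine ⟨hL, ?_, ?_⟩
  · calc cs.length = (ascentLengths p).length := hlen
      _ ≤ p.length + 1 := length_ascentLengths_le p
      _ ≤ L + 1 := by omega
  · intro x hx0
    have hx : x ∈ cs := hx0
    obtain ⟨i, hi, hx'⟩ := List.mem_iff_getElem.1 hx
    have hia : i < (ascentLengths p).length := by omega
    have hiz : i < ((ascentLengths p).zip cs).length := by
      rw [List.length_zip]
      omega
    have hmemz := List.getElem_mem hiz
    rw [List.getElem_zip, hx'] at hmemz
    have hxa := hcond _ hmemz
    have hj : (ascentLengths p)[i] ≤ L :=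
      le_trans (mem_ascentLengths_le (List.getElem_mem hia)) hL
    have hsup : a ((ascentLengths p)[i]) ≤ B :=
      Finset.le_sup (Finset.mem_range.2 (by omega))
    exact Set.mem_Iio.2 (lt_of_lt_of_le hxa hsup)

lemma finite_N (a : ℕ → ℕ) (n : ℕ) : (NColouredDyck n a).Finite := by
  apply (finite_CD_le a (2 * n)).subset
  intro pc h
  rw [mem_N_iff] at h
  exact ⟨h.1, le_of_eq h.2⟩

lemma finite_Tup (a : ℕ → ℕ) (i m : ℕ) : (Tup a i m).Finite := by
  apply Set.Finite.subset (finite_lists (finite_CD_le a (2 * m)) i)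
  rintro Ps ⟨h1, h2, h3⟩
  refine ⟨le_of_eq h1, fun P hP => ⟨h3 P hP, ?_⟩⟩
  have hx : P.1.length ∈ Ps.map (fun P => P.1.length) := List.mem_map_of_mem hP
  have := List.single_le_sum (fun (x : ℕ) _ => Nat.zero_le x) _ hx
  omega


/-! ### cardinalities -/

lemma my_card_sigma {ι : Type*} [Fintype ι] (f : ι → Type*) [∀ i, Finite (f i)] :
    Nat.card ((i : ι) × f i) = ∑ i, Nat.card (f i) := by
  classical
  haveI : ∀ i, Fintype (f i) := fun i => Fintype.ofFinite _
  simp [Nat.card_eq_fintype_card]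

lemma tup_zero (a : ℕ → ℕ) (m : ℕ) :
    Nat.card (Tup a 0 m) = if m = 0 then 1 else 0 := by
  rcases eq_or_ne m 0 with rfl | hm
  · have : Tup a 0 0 = {[]} := by
      ext Ps
      constructor
      · rintro ⟨h1, _, _⟩
        exact List.length_eq_zero_iff.1 h1
      · rintro rfl
        exact ⟨rfl, by simp, by simp⟩
    rw [this, if_pos rfl]
    simp [Nat.card_coe_set_eq]
  · have : Tup a 0 m = ∅ := by
      ext Ps
      simp only [Set.mem_empty_iff_false, iff_false]
      rintro ⟨h1, h2, _⟩
      rw [List.length_eq_zero_iff.1 h1] at h2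
      simp at h2
      omega
    rw [this, if_neg hm]
    simp [Nat.card_coe_set_eq]

lemma tup_succ (a : ℕ → ℕ) (i m : ℕ) :
    Nat.card (Tup a (i + 1) m) =
      ∑ pq ∈ Finset.HasAntidiagonal.antidiagonal m,
        Nat.card (NColouredDyck pq.1 a) * Nat.card (Tup a i pq.2) := by
  classical
  haveI h1 : ∀ (j : ℕ), Finite (NColouredDyck j a) := fun j => (finite_N a j).to_subtype
  haveI h2 : ∀ j l, Finite (Tup a j l) := fun j l => (finite_Tup a j l).to_subtype
  have hmem : ∀ (x : (pq : {x : ℕ × ℕ // x ∈ Finset.HasAntidiagonal.antidiagonal m}) ×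
      (↥(NColouredDyck pq.1.1 a) × ↥(Tup a i pq.1.2))),
      (x.2.1.1 :: x.2.2.1) ∈ Tup a (i + 1) m := by
    rintro ⟨⟨⟨p, q⟩, hpq⟩, ⟨P, hP⟩, ⟨Ps, hPs⟩⟩
    rw [Finset.HasAntidiagonal.mem_antidiagonal] at hpq
    rw [mem_N_iff] at hP
    obtain ⟨hl, hs, hcd⟩ := hPs
    refine ⟨by simpa using hl, ?_, ?_⟩
    · simp only [List.map_cons, List.sum_cons, hs, hP.2]
      omega
    · intro Q hQ
      rcases List.mem_cons.1 hQ with rfl | hQ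
      · exact hP.1
      · exact hcd Q hQ
  have key : Nat.card ((pq : {x : ℕ × ℕ // x ∈ Finset.HasAntidiagonal.antidiagonal m}) ×
      (↥(NColouredDyck pq.1.1 a) × ↥(Tup a i pq.1.2))) = Nat.card (Tup a (i + 1) m) := by
    apply Nat.card_eq_of_bijective (f := fun x => ⟨x.2.1.1 :: x.2.2.1, hmem x⟩)
    constructor
    · rintro ⟨⟨⟨p, q⟩, hpq⟩, ⟨P, hP⟩, ⟨Ps, hPs⟩⟩ ⟨⟨⟨p', q'⟩, hpq'⟩, ⟨P', hP'⟩, ⟨Ps', hPs'⟩⟩ hEq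
      simp only [Subtype.mk.injEq, List.cons.injEq] at hEq
      obtain ⟨hPP, hPsPs⟩ := hEq
      have hp : p = p' := by
        have e1 : P.1.length = 2 * p := (mem_N_iff.1 hP).2
        have e2 : P'.1.length = 2 * p' := (mem_N_iff.1 hP').2
        rw [hPP] at e1
        omega
      have hq : q = q' := by
        rw [Finset.HasAntidiagonal.mem_antidiagonal] at hpq hpq'
        omega
      subst hp hq hPP hPsPs
      rfl
    · rintro ⟨Ps, hPs⟩
      obtain ⟨hl, hs, hcd⟩ := hPs
      rcases Ps with _ | ⟨P, Ps⟩
      · simp at hl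
      have hdP : IsDyckWord P.1 := (hcd P (List.mem_cons_self)).1
      have hlenP : P.1.length = 2 * P.1.count false := by
        have := length_eq_counts P.1
        have := hdP.2
        omega
      set p := P.1.count false with hpdef
      simp only [List.map_cons, List.sum_cons] at hs
      have hple : 2 * p ≤ 2 * m := by omega
      refine ⟨⟨⟨⟨p, m - p⟩, Finset.HasAntidiagonal.mem_antidiagonal.2 (by omega)⟩,
        ⟨P, mem_N_iff.2 ⟨hcd P (List.mem_cons_self), hlenP⟩⟩,
        ⟨Ps, by simpa using hl,
          (by omega : (List.map (fun P => P.1.length) Ps).sum = 2 * (m - p)),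
          fun Q hQ => hcd Q (List.mem_cons_of_mem _ hQ)⟩⟩, rfl⟩
  rw [← key, my_card_sigma]
  rw [← Finset.sum_coe_sort (Finset.HasAntidiagonal.antidiagonal m)]
  apply Finset.sum_congr rfl
  intro pq _
  rw [Nat.card_prod]


lemma card_N_zero (a : ℕ → ℕ) : Nat.card (NColouredDyck 0 a) = 1 := by
  have h : NColouredDyck 0 a = {([], [])} := by
    ext ⟨p, cs⟩
    constructor
    · rintro ⟨hd, hlen, hclen, hcond⟩
      have hp : p = [] := List.length_eq_zero_iff.1 (by simpa using hlen)
      subst hp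
      have hc : cs = [] := List.length_eq_zero_iff.1 (by simpa [ascentLengths_nil] using hclen)
      subst hc
      rfl
    · rintro h
      cases h
      exact ⟨⟨by simp, by simp⟩, by simp, by simp [ascentLengths_nil], by
        intro q hq
        simp [ascentLengths_nil] at hq⟩
  rw [h]
  simp [Nat.card_coe_set_eq]

lemma card_N_succ (a : ℕ → ℕ) {n : ℕ} (hn : n ≠ 0) :
    Nat.card (NColouredDyck n a) =
      ∑ i ∈ Finset.Icc 1 n, a i * Nat.card (Tup a i (n - i)) := by
  classical
  haveI h2 : ∀ j l, Finite (Tup a j l) := fun j l => (finite_Tup a j l).to_subtype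
  have hmem : ∀ (x : (i : {j : ℕ // j ∈ Finset.Icc 1 n}) ×
      (Fin (a i.1) × ↥(Tup a i.1 (n - i.1)))),
      (List.replicate x.1.1 true ++ ((x.2.2.1.map (fun P => false :: P.1)).flatten),
        x.2.1.1 :: ((x.2.2.1.map Prod.snd).flatten)) ∈ NColouredDyck n a := by
    rintro ⟨⟨k, hk⟩, ⟨c, Ps⟩⟩
    rw [Finset.mem_Icc] at hk
    have := compose_mem a (k := k) (c := c.1) (m := n - k) (by omega) c.2 Ps.2
    rwa [show k + (n - k) = n by omega] at this
  have key : Nat.card ((i : {j : ℕ // j ∈ Finset.Icc 1 n}) ×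
      (Fin (a i.1) × ↥(Tup a i.1 (n - i.1)))) = Nat.card (NColouredDyck n a) := by
    apply Nat.card_eq_of_bijective (f := fun x => ⟨_, hmem x⟩)
    constructor
    · rintro ⟨⟨k, hk⟩, ⟨c, ⟨Ps, hPs⟩⟩⟩ ⟨⟨k', hk'⟩, ⟨c', ⟨Ps', hPs'⟩⟩⟩ hEq
      simp only [Subtype.mk.injEq, Prod.mk.injEq] at hEq
      rw [Finset.mem_Icc] at hk hk'
      obtain ⟨hkk, hcc, hPP⟩ := compose_inj a (k := k) (k' := k') (c := c.1) (c' := c'.1) hPs.1 hPs'.1 (by omega) (by omega)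
        hPs.2.2 hPs'.2.2 hEq.1 hEq.2
      subst hkk hPP
      have : c = c' := Fin.ext hcc
      subst this
      rfl
    · rintro ⟨pc, hpc⟩
      obtain ⟨k, c, Ps, hk0, hkn, hc, hT, hpceq⟩ := exists_decomp a hn hpc
      refine ⟨⟨⟨k, Finset.mem_Icc.2 ⟨by omega, hkn⟩⟩, ⟨⟨c, hc⟩, ⟨Ps, hT⟩⟩⟩, ?_⟩
      simp only [Subtype.mk.injEq]
      exact hpceq.symm
  rw [← key, my_card_sigma, ← Finset.sum_coe_sort (Finset.Icc 1 n)]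
  apply Finset.sum_congr rfl
  intro i _
  rw [Nat.card_prod, Nat.card_eq_fintype_card, Fintype.card_fin]


lemma coeff_M_pow (a : ℕ → ℕ) : ∀ (i m : ℕ),
    (PowerSeries.coeff (R := ℚ) m) ((PowerSeries.mk fun j => (Nat.card (NColouredDyck j a) : ℚ)) ^ i)
      = (Nat.card (Tup a i m) : ℚ) := by
  intro i
  induction i with
  | zero =>
    intro m
    rw [pow_zero, tup_zero, PowerSeries.coeff_one]
    split_ifs <;> simp
  | succ i ih =>
    intro m
    rw [pow_succ, mul_comm, PowerSeries.coeff_mul, tup_succ]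
    push_cast
    apply Finset.sum_congr rfl
    intro pq _
    rw [PowerSeries.coeff_mk, ih pq.2]

end CDGF

theorem coloured_dyck_gf_functional_equation (a : ℕ → ℕ) (ha : a 0 = 1) :
    ∀ n : ℕ,
      (PowerSeries.coeff (R := ℚ) n) (PowerSeries.mk fun j => (Nat.card (NColouredDyck j a) : ℚ)) =
        (PowerSeries.coeff (R := ℚ) n) (∑ i ∈ Finset.range (n + 1),
          (a i : ℚ) • ((PowerSeries.X *
            PowerSeries.mk fun j => (Nat.card (NColouredDyck j a) : ℚ)) ^ i)) := by
  intro n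
  rw [PowerSeries.coeff_mk, map_sum]
  have hterm : ∀ i ∈ Finset.range (n + 1),
      (PowerSeries.coeff (R := ℚ) n) ((a i : ℚ) •
        ((PowerSeries.X * PowerSeries.mk fun j => (Nat.card (NColouredDyck j a) : ℚ)) ^ i))
      = (a i : ℚ) * (Nat.card (CDGF.Tup a i (n - i)) : ℚ) := by
    intro i hi
    rw [map_smul, smul_eq_mul]
    congr 1
    rw [mul_pow, PowerSeries.coeff_X_pow_mul',
      if_pos (by rw [Finset.mem_range] at hi; omega), CDGF.coeff_M_pow]
  rw [Finset.sum_congr rfl hterm]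
  rcases eq_or_ne n 0 with rfl | hn
  · rw [CDGF.card_N_zero]
    simp [CDGF.tup_zero, ha, -Nat.card_coe_set_eq]
  · rw [CDGF.card_N_succ a hn]
    have hins : Finset.range (n + 1) = insert 0 (Finset.Icc 1 n) := by
      ext x
      simp only [Finset.mem_range, Finset.mem_insert, Finset.mem_Icc]
      omega
    rw [hins, Finset.sum_insert (by simp)]
    rw [show n - 0 = n from rfl, CDGF.tup_zero, if_neg hn]
    push_cast
    simp
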